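/- Let H be a complex Hilbert space, J a conjugation on H, and S a densely defined closed J-symmetric operator in H. Equip dom(J S* J) = J·dom(S*) with the inner product (u,v)_* = ⟨Ju, Jv⟩ + ⟨S* J u, S* J v⟩, which makes it a Hilbert space. Then dom(J S* J) decomposes as the (·,·)_*-orthogonal direct sum dom(J S* J) = dom(S) ⊕_* ker((S* J)² + I). -/

import Mathlib

noncomputable section

local notation "⟪" x ", " y "⟫" => @inner ℂ _ _ x y

/-- `w` belongs to `ker((S* J)² + I)`, i.e. `J w ∈ dom S*`, `J S* J w ∈ dom S*` and
`S* J S* J w = -w`. -/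
def InKerAux {H : Type*} [NormedAddCommGroup H] [InnerProductSpace ℂ H] [CompleteSpace H]
    (J : H → H) (S : H →ₗ.[ℂ] H) (w : H) : Prop :=
  ∃ (h1 : J w ∈ S.adjoint.domain) (h2 : J (S.adjoint ⟨J w, h1⟩) ∈ S.adjoint.domain),
    S.adjoint ⟨J (S.adjoint ⟨J w, h1⟩), h2⟩ = -w

/-- Constructor for `InKerAux` with an explicit intermediate value. -/
theorem inKerAux_of {H : Type*} [NormedAddCommGroup H] [InnerProductSpace ℂ H] [CompleteSpace H]
    (J : H → H) (S : H →ₗ.[ℂ] H) (w y : H) (h1 : J w ∈ S.adjoint.domain)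
    (hy : S.adjoint ⟨J w, h1⟩ = y) (h2 : J y ∈ S.adjoint.domain)
    (h3 : S.adjoint ⟨J y, h2⟩ = -w) : InKerAux J S w := by
  subst hy
  exact ⟨h1, h2, h3⟩

theorem Race_decomposition
    {H : Type*} [NormedAddCommGroup H] [InnerProductSpace ℂ H] [CompleteSpace H]
    (J : H → H)
    (hJadd : ∀ u v : H, J (u + v) = J u + J v)
    (hJsmul : ∀ (c : ℂ) (u : H), J (c • u) = (starRingEnd ℂ) c • J u)
    (hJinv : ∀ u : H, J (J u) = u)
    (hJinner : ∀ u v : H, ⟪J u, v⟫ = ⟪J v, u⟫)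
    (S : H →ₗ.[ℂ] H)
    (hdense : Dense (S.domain : Set H))
    (hclosed : IsClosed (S.graph : Set (H × H)))
    (hJsym : ∀ u v : S.domain, ⟪S v, J (u : H)⟫ = ⟪(v : H), J (S u)⟫) :
    -- `dom S ⊆ dom (J S* J)`:
    (∀ v : H, v ∈ S.domain → J v ∈ S.adjoint.domain) ∧
    -- existence of the decomposition:
    (∀ u : H, J u ∈ S.adjoint.domain →
      ∃ v w : H, v ∈ S.domain ∧ InKerAux J S w ∧ u = v + w) ∧
    -- `(·,·)_*`-orthogonality of `dom S` and `ker((S* J)² + I)`: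
    (∀ (v w : H) (hv : v ∈ S.domain) (hv' : J v ∈ S.adjoint.domain)
        (hw : J w ∈ S.adjoint.domain), InKerAux J S w →
        ⟪J v, J w⟫ + ⟪S.adjoint ⟨J v, hv'⟩, S.adjoint ⟨J w, hw⟩⟫ = 0) ∧
    -- uniqueness of the decomposition:
    (∀ v v' w w' : H, v ∈ S.domain → v' ∈ S.domain → InKerAux J S w → InKerAux J S w' →
      v + w = v' + w' → v = v' ∧ w = w') := by
  -- Basic facts about `J`
  have hJ0 : J 0 = 0 := by
    have h := hJadd 0 0
    rw [add_zero] at h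
    exact add_eq_left.mp h.symm
  have hJsub : ∀ u v : H, J (u - v) = J u - J v := by
    intro u v
    have h := hJadd (u - v) v
    rw [sub_add_cancel] at h
    exact eq_sub_of_add_eq h.symm
  have hJnorm : ∀ z : H, ‖J z‖ = ‖z‖ := by
    intro z
    have h : ⟪J z, J z⟫ = ⟪z, z⟫ := by rw [hJinner z (J z), hJinv]
    rw [inner_self_eq_norm_sq_to_K, inner_self_eq_norm_sq_to_K] at h
    have h2 : (‖J z‖ : ℝ) ^ 2 = (‖z‖ : ℝ) ^ 2 := by exact_mod_cast h
    nlinarith [norm_nonneg (J z), norm_nonneg z]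
  have hJcont : Continuous J := by
    have : Isometry J := Isometry.of_dist_eq fun a b => by
      rw [dist_eq_norm, dist_eq_norm, ← hJsub a b, hJnorm]
    exact this.continuous
  -- adjoint facts
  have fa := LinearPMap.adjoint_isFormalAdjoint hdense (T := S)
  have hswap : ∀ (x v : S.domain), ⟪J (S v), (x : H)⟫ = ⟪J (v : H), S x⟫ := by
    intro x v
    calc ⟪J (S v), (x : H)⟫ = ⟪J (x : H), S v⟫ := hJinner _ _
      _ = (starRingEnd ℂ) ⟪S v, J (x : H)⟫ := (inner_conj_symm _ _).symm
      _ = (starRingEnd ℂ) ⟪(v : H), J (S x)⟫ := by rw [hJsym x v]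
      _ = ⟪J (S x), (v : H)⟫ := inner_conj_symm _ _
      _ = ⟪J (v : H), S x⟫ := hJinner _ _
  have hmem : ∀ v : S.domain, J (v : H) ∈ S.adjoint.domain := fun v =>
    LinearPMap.mem_adjoint_domain_of_exists _ ⟨J (S v), fun x => hswap x v⟩
  have hval : ∀ (v : S.domain) (h : J (v : H) ∈ S.adjoint.domain),
      S.adjoint ⟨J (v : H), h⟩ = J (S v) := fun v h =>
    LinearPMap.adjoint_apply_eq hdense _ fun x => hswap x v
  -- orthogonality
  have horth : ∀ (v w : H) (hv : v ∈ S.domain) (hv' : J v ∈ S.adjoint.domain)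
      (hw : J w ∈ S.adjoint.domain), InKerAux J S w →
      ⟪J v, J w⟫ + ⟪S.adjoint ⟨J v, hv'⟩, S.adjoint ⟨J w, hw⟩⟫ = 0 := by
    rintro v w hv hv' hw ⟨h1, h2, h3⟩
    have e1 : ⟪J v, J w⟫ = ⟪w, v⟫ := by rw [hJinner v (J w), hJinv]
    have e2 : S.adjoint ⟨J v, hv'⟩ = J (S ⟨v, hv⟩) := hval ⟨v, hv⟩ hv'
    have h2' : J (S.adjoint ⟨J w, hw⟩) ∈ S.adjoint.domain := h2
    have e3 : ⟪S.adjoint ⟨J v, hv'⟩, S.adjoint ⟨J w, hw⟩⟫ = -⟪w, v⟫ := by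
      calc ⟪S.adjoint ⟨J v, hv'⟩, S.adjoint ⟨J w, hw⟩⟫
          = ⟪J (S ⟨v, hv⟩), S.adjoint ⟨J w, hw⟩⟫ := by rw [e2]
        _ = ⟪J (S.adjoint ⟨J w, hw⟩), S ⟨v, hv⟩⟫ := hJinner _ _
        _ = ⟪S.adjoint ⟨J (S.adjoint ⟨J w, hw⟩), h2'⟩, (⟨v, hv⟩ : S.domain)⟫ :=
            (fa ⟨J (S.adjoint ⟨J w, hw⟩), h2'⟩ ⟨v, hv⟩).symm
        _ = ⟪(-w : H), v⟫ := by rw [show S.adjoint ⟨J (S.adjoint ⟨J w, hw⟩), h2'⟩ = -w from h3]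
        _ = -⟪w, v⟫ := inner_neg_left _ _
    rw [e1, e3, add_neg_cancel]
  -- closedness under subtraction of the kernel
  have hker_sub : ∀ w w' : H, InKerAux J S w → InKerAux J S w' → InKerAux J S (w' - w) := by
    rintro w w' ⟨h1, h2, h3⟩ ⟨h1', h2', h3'⟩
    have hm1 : J (w' - w) ∈ S.adjoint.domain := by rw [hJsub]; exact sub_mem h1' h1
    have hy : S.adjoint ⟨J (w' - w), hm1⟩
        = S.adjoint ⟨J w', h1'⟩ - S.adjoint ⟨J w, h1⟩ := by
      have hh : (⟨J (w' - w), hm1⟩ : S.adjoint.domain) = ⟨J w', h1'⟩ - ⟨J w, h1⟩ := by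
        ext
        simp [hJsub]
      rw [hh, LinearPMap.map_sub]
    have hm2 : J (S.adjoint ⟨J w', h1'⟩ - S.adjoint ⟨J w, h1⟩) ∈ S.adjoint.domain := by
      rw [hJsub]; exact sub_mem h2' h2
    refine inKerAux_of J S _ _ hm1 hy hm2 ?_
    have hh : (⟨J (S.adjoint ⟨J w', h1'⟩ - S.adjoint ⟨J w, h1⟩), hm2⟩ : S.adjoint.domain)
        = ⟨J (S.adjoint ⟨J w', h1'⟩), h2'⟩ - ⟨J (S.adjoint ⟨J w, h1⟩), h2⟩ := by
      ext
      simp [hJsub]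
    rw [hh, LinearPMap.map_sub, h3, h3']
    abel
  refine ⟨fun v hv => hmem ⟨v, hv⟩, ?_, horth, ?_⟩
  · -- existence
    intro u hu
    set P := WithLp 2 (H × H) with hP
    have hfst : ∀ p q : P, (p + q).fst = p.fst + q.fst := fun _ _ => rfl
    have hsnd : ∀ p q : P, (p + q).snd = p.snd + q.snd := fun _ _ => rfl
    let M : Submodule ℂ P :=
      { carrier := {p : P | (J p.fst, J p.snd) ∈ S.graph}
        add_mem' := by
          intro p q hp hq
          have h := S.graph.add_mem hp hq
          show (J ((p + q : P)).fst, J ((p + q : P)).snd) ∈ S.graph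
          have e1 : ((p + q : P)).fst = p.fst + q.fst := rfl
          have e2 : ((p + q : P)).snd = p.snd + q.snd := rfl
          rw [e1, e2, hJadd, hJadd]
          simpa [Prod.mk_add_mk] using h
        zero_mem' := by
          show (J ((0 : P)).fst, J ((0 : P)).snd) ∈ S.graph
          have e1 : ((0 : P)).fst = (0 : H) := rfl
          have e2 : ((0 : P)).snd = (0 : H) := rfl
          rw [e1, e2, hJ0]
          exact S.graph.zero_mem
        smul_mem' := by
          intro c p hp
          have h := S.graph.smul_mem ((starRingEnd ℂ) c) hp
          show (J ((c • p : P)).fst, J ((c • p : P)).snd) ∈ S.graph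
          have e1 : ((c • p : P)).fst = c • p.fst := rfl
          have e2 : ((c • p : P)).snd = c • p.snd := rfl
          rw [e1, e2, hJsmul, hJsmul]
          simpa [Prod.smul_mk] using h }
    have hMclosed : IsClosed (M : Set P) := by
      have hcont : Continuous fun p : P => (J p.fst, J p.snd) := by
        have h1 : Continuous fun p : P => (p.fst, p.snd) :=
          (WithLp.prodContinuousLinearEquiv 2 ℂ H H).continuous
        exact (hJcont.comp (continuous_fst.comp h1)).prodMk
          (hJcont.comp (continuous_snd.comp h1))
      exact IsClosed.preimage hcont hclosed
    haveI : CompleteSpace M := hMclosed.completeSpace_coe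
    obtain ⟨m, hmM, n, hnM, hgmn⟩ := M.exists_add_mem_mem_orthogonal
      ((WithLp.equiv 2 (H × H)).symm (J u, S.adjoint ⟨J u, hu⟩) : P)
    -- unpack m
    have hm : (J m.fst, J m.snd) ∈ S.graph := hmM
    rw [LinearPMap.mem_graph_iff] at hm
    obtain ⟨vd, hvd1, hvd2⟩ := hm
    have hvd1' : (vd : H) = J m.fst := hvd1
    have hvmem : J m.fst ∈ S.domain := by rw [← hvd1']; exact vd.2
    have hvdeq : vd = ⟨J m.fst, hvmem⟩ := Subtype.ext hvd1'
    -- `m.fst` is in the adjoint domain with value `m.snd`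
    have hm1dom : m.fst ∈ S.adjoint.domain := by
      have h2 := hmem ⟨J m.fst, hvmem⟩
      rwa [hJinv] at h2
    have hSm1 : S.adjoint ⟨m.fst, hm1dom⟩ = m.snd := by
      have h' : J (J m.fst) ∈ S.adjoint.domain := by rw [hJinv]; exact hm1dom
      have h := hval ⟨J m.fst, hvmem⟩ h'
      have hsub : (⟨J (J m.fst), h'⟩ : S.adjoint.domain) = ⟨m.fst, hm1dom⟩ :=
        Subtype.ext (hJinv _)
      rw [hsub] at h
      rw [h, ← hvdeq, hvd2, hJinv]
    -- components of n
    have hn1 : J u = m.fst + n.fst := congrArg (fun p : P => p.fst) hgmn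
    have hn2 : S.adjoint ⟨J u, hu⟩ = m.snd + n.snd := congrArg (fun p : P => p.snd) hgmn
    have hn1' : n.fst = J u - m.fst := by rw [hn1]; abel
    have hn2' : n.snd = S.adjoint ⟨J u, hu⟩ - m.snd := by rw [hn2]; abel
    have hJw : J (u - J m.fst) = n.fst := by
      rw [hJsub, hJinv, hn1']
    have hwdom : n.fst ∈ S.adjoint.domain := by
      rw [hn1']; exact sub_mem hu hm1dom
    have h1w : J (u - J m.fst) ∈ S.adjoint.domain := by rw [hJw]; exact hwdom
    have hvaln : S.adjoint ⟨n.fst, hwdom⟩ = n.snd := by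
      have hsub : (⟨n.fst, hwdom⟩ : S.adjoint.domain) = ⟨J u, hu⟩ - ⟨m.fst, hm1dom⟩ :=
        Subtype.ext (by simp [hn1'])
      rw [hsub, LinearPMap.map_sub, hSm1, hn2']
    -- the orthogonality relation
    have hperp : ∀ x : S.domain, ⟪-(J n.fst), (x : H)⟫ = ⟪J n.snd, S x⟫ := by
      intro x
      have hqmem : ((WithLp.equiv 2 (H × H)).symm (J (x : H), J (S x)) : P) ∈ M := by
        have h : (J (J (x : H)), J (J ((S x : H)))) ∈ S.graph := by
          rw [hJinv, hJinv]; exact S.mem_graph x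
        exact h
      have h0 := (Submodule.mem_orthogonal M n).mp hnM _ hqmem
      rw [WithLp.prod_inner_apply] at h0
      simp only [WithLp.ofLp_fst, WithLp.ofLp_snd] at h0
      have e1 : (((WithLp.equiv 2 (H × H)).symm (J (x : H), J (S x)) : P)).fst = J (x : H) := rfl
      have e2 : (((WithLp.equiv 2 (H × H)).symm (J (x : H), J (S x)) : P)).snd = J ((S x : H)) := rfl
      rw [e1, e2] at h0
      have ha : ⟪J (x : H), n.fst⟫ = ⟪J n.fst, (x : H)⟫ := hJinner _ _
      have hb : ⟪J ((S x : H)), n.snd⟫ = ⟪J n.snd, (S x : H)⟫ := hJinner _ _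
      rw [ha, hb] at h0
      rw [inner_neg_left]
      linear_combination -h0
    have hJn2dom : J n.snd ∈ S.adjoint.domain :=
      LinearPMap.mem_adjoint_domain_of_exists _ ⟨-(J n.fst), fun x => hperp x⟩
    have hSJn2 : S.adjoint ⟨J n.snd, hJn2dom⟩ = -(J n.fst) :=
      LinearPMap.adjoint_apply_eq hdense _ fun x => hperp x
    refine ⟨J m.fst, u - J m.fst, hvmem, ?_, by abel⟩
    refine inKerAux_of J S _ n.snd h1w ?_ hJn2dom ?_
    · have hsub : (⟨J (u - J m.fst), h1w⟩ : S.adjoint.domain) = ⟨n.fst, hwdom⟩ :=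
        Subtype.ext hJw
      rw [hsub, hvaln]
    · rw [hSJn2, ← hJw, hJinv]
  · -- uniqueness
    intro v v' w w' hv hv' hkw hkw' heq
    have hz : v - v' = w' - w := by
      rw [sub_eq_sub_iff_add_eq_add, add_comm w' v']
      exact heq
    have hzmem : v - v' ∈ S.domain := sub_mem hv hv'
    have hker : InKerAux J S (w' - w) := hker_sub w w' hkw hkw'
    rw [← hz] at hker
    obtain ⟨k1, k2, k3⟩ := hker
    have h0 := horth (v - v') (v - v') hzmem k1 k1 ⟨k1, k2, k3⟩
    rw [inner_self_eq_norm_sq_to_K, inner_self_eq_norm_sq_to_K] at h0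
    have hr : (‖J (v - v')‖ ^ 2 + ‖S.adjoint ⟨J (v - v'), k1⟩‖ ^ 2 : ℝ) = 0 := by
      have h1 : ((‖J (v - v')‖ ^ 2 + ‖S.adjoint ⟨J (v - v'), k1⟩‖ ^ 2 : ℝ) : ℂ) = 0 := by
        push_cast
        exact h0
      exact_mod_cast h1
    have hn0 : ‖J (v - v')‖ = 0 := by
      nlinarith [norm_nonneg (J (v - v')),
        sq_nonneg ‖S.adjoint ⟨J (v - v'), k1⟩‖]
    have hJz : J (v - v') = 0 := norm_eq_zero.mp hn0
    have hz0 : v - v' = 0 := by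
      have := congrArg J hJz
      rwa [hJinv, hJ0] at this
    constructor
    · exact sub_eq_zero.mp hz0
    · have : w' - w = 0 := by rw [← hz]; exact hz0
      exact (sub_eq_zero.mp this).symm
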